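/- Let λ ∈ ℝ, T ∈ (0,∞], and let u : [0,T) × S¹ → ℝ be C³ in θ and C¹ in t (with the mixed partial derivatives u_tθ, u_tθθ continuous) solving the μ-λ equation with momentum m(t,θ) = σ − u_θθ(t,θ), where σ = ∫₀¹ u(t,θ) dθ (which is constant in t). Then the kinetic energy E(t) = ∫₀¹ u_θ(t,θ)² dθ satisfies E'(t) = −(λ−2) ∫₀¹ u_θ(t,θ)³ dθ for all t. In particular, if λ = 2 then E(t) is constant in t, and if λ = 2 or λ = 3 then I(t) = ((λ−3)/2) E(t) − λσ² is constant in t (equal to −3σ² when λ = 3). -/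

import Mathlib

set_option maxHeartbeats 1000000


open Set MeasureTheory intervalIntegral
open scoped Interval

/-- Fubini for interval integrals of jointly continuous functions. -/
private lemma fubini_cont (f : ℝ → ℝ → ℝ) (hf : Continuous fun p : ℝ × ℝ => f p.1 p.2)
    (a b c d : ℝ) :
    (∫ x in a..b, ∫ y in c..d, f x y) = ∫ y in c..d, ∫ x in a..b, f x y := by
  have core : (∫ x in Ι a b, ∫ y in Ι c d, f x y) = ∫ y in Ι c d, ∫ x in Ι a b, f x y := by
    have hc : IsCompact ((uIcc a b) ×ˢ (uIcc c d)) := isCompact_uIcc.prod isCompact_uIcc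
    have hi : IntegrableOn (fun p : ℝ × ℝ => f p.1 p.2) ((Ι a b) ×ˢ (Ι c d)) :=
      (hf.continuousOn.integrableOn_compact hc).mono_set
        (prod_mono uIoc_subset_uIcc uIoc_subset_uIcc)
    have hi' : Integrable (Function.uncurry f)
        ((volume.restrict (Ι a b)).prod (volume.restrict (Ι c d))) := by
      rw [Measure.prod_restrict, ← Measure.volume_eq_prod]
      exact hi
    exact MeasureTheory.integral_integral_swap hi'
  simp only [intervalIntegral_eq_integral_uIoc, MeasureTheory.integral_smul]
  rw [core, smul_comm]

/-- FTC-2 within a compact time interval. -/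
private lemma ftc_time {b : ℝ} (W w : ℝ → ℝ)
    (hW : ∀ r ∈ Icc (0:ℝ) b, HasDerivWithinAt W (w r) (Icc (0:ℝ) b) r)
    (hw : Continuous w) {t s : ℝ} (ht : t ∈ Icc (0:ℝ) b) (hs : s ∈ Icc (0:ℝ) b) :
    W s = W t + ∫ r in t..s, w r := by
  have hsub : uIcc t s ⊆ Icc (0:ℝ) b := uIcc_subset_Icc ht hs
  have h := intervalIntegral.integral_eq_sub_of_hasDeriv_right
    (f := W) (f' := w)
    (fun x hx => ((hW x (hsub hx)).continuousWithinAt).mono hsub)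
    (fun x hx => by
      have hxm : x ∈ uIcc t s := Ioo_subset_Icc_self hx
      have hx0 : 0 < x := lt_of_le_of_lt (le_min ht.1 hs.1) hx.1
      have hxb : x < b := lt_of_lt_of_le hx.2 (max_le ht.2 hs.2)
      exact ((hW x (hsub hxm)).hasDerivAt (Icc_mem_nhds hx0 hxb)).hasDerivWithinAt)
    (hw.intervalIntegrable t s)
  linarith [h]

/-- Differentiation of a parameter-dependent interval integral, within a compact
time interval, via Fubini. -/
private lemma deriv_param {b : ℝ} (W w : ℝ → ℝ → ℝ) (a : ℝ)
    (hw : Continuous fun p : ℝ × ℝ => w p.1 p.2)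
    (hW : ∀ θ : ℝ, ∀ r ∈ Icc (0:ℝ) b, HasDerivWithinAt (fun s => W s θ) (w r θ) (Icc (0:ℝ) b) r)
    (hWc : ∀ s ∈ Icc (0:ℝ) b, Continuous (W s))
    {t : ℝ} (ht : t ∈ Icc (0:ℝ) b) :
    HasDerivWithinAt (fun s => ∫ φ in (0:ℝ)..a, W s φ) (∫ φ in (0:ℝ)..a, w t φ)
      (Icc (0:ℝ) b) t := by
  have hGc : Continuous fun r => ∫ φ in (0:ℝ)..a, w r φ :=
    intervalIntegral.continuous_parametric_intervalIntegral_of_continuous' (f := w) hw 0 a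
  have key : ∀ s ∈ Icc (0:ℝ) b, (∫ φ in (0:ℝ)..a, W s φ)
      = (∫ φ in (0:ℝ)..a, W t φ) + ∫ r in t..s, ∫ φ in (0:ℝ)..a, w r φ := by
    intro s hs
    have hper : ∀ φ, W s φ = W t φ + ∫ r in t..s, w r φ := fun φ =>
      ftc_time (fun r => W r φ) (fun r => w r φ) (fun r hr => hW φ r hr)
        (hw.comp (continuous_id.prodMk continuous_const)) ht hs
    have hint : Continuous fun φ => ∫ r in t..s, w r φ :=
      intervalIntegral.continuous_parametric_intervalIntegral_of_continuous'
        (f := fun φ r => w r φ) (hw.comp continuous_swap) t s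
    calc (∫ φ in (0:ℝ)..a, W s φ)
        = ∫ φ in (0:ℝ)..a, (W t φ + ∫ r in t..s, w r φ) :=
          intervalIntegral.integral_congr (fun φ _ => hper φ)
      _ = (∫ φ in (0:ℝ)..a, W t φ) + ∫ φ in (0:ℝ)..a, ∫ r in t..s, w r φ :=
          intervalIntegral.integral_add ((hWc t ht).intervalIntegrable _ _)
            (hint.intervalIntegrable _ _)
      _ = (∫ φ in (0:ℝ)..a, W t φ) + ∫ r in t..s, ∫ φ in (0:ℝ)..a, w r φ := by
          rw [fubini_cont (fun φ r => w r φ) (hw.comp continuous_swap) 0 a t s]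
  have hprim : HasDerivWithinAt
      (fun s => (∫ φ in (0:ℝ)..a, W t φ) + ∫ r in t..s, ∫ φ in (0:ℝ)..a, w r φ)
      (∫ φ in (0:ℝ)..a, w t φ) (Icc (0:ℝ) b) t :=
    (((hGc.integral_hasStrictDerivAt t t).hasDerivAt).hasDerivWithinAt).const_add _
  exact hprim.congr key (key t ht)

/-- Joint continuity on `[0,b] × ℝ` from joint continuity of the time derivative. -/
private lemma joint_cont {b : ℝ} (W w : ℝ → ℝ → ℝ)
    (hw : Continuous fun p : ℝ × ℝ => w p.1 p.2)
    (hW : ∀ θ : ℝ, ∀ r ∈ Icc (0:ℝ) b, HasDerivWithinAt (fun s => W s θ) (w r θ) (Icc (0:ℝ) b) r)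
    (hW0 : Continuous (W 0)) (hb : 0 ≤ b) :
    ContinuousOn (fun p : ℝ × ℝ => W p.1 p.2) (Icc (0:ℝ) b ×ˢ univ) := by
  have hcont : Continuous fun p : ℝ × ℝ => W 0 p.2 + ∫ r in (0:ℝ)..p.1, w r p.2 := by
    apply Continuous.add (hW0.comp continuous_snd)
    have hswap : Continuous fun p : ℝ × ℝ => w p.2 p.1 := hw.comp continuous_swap
    have h := intervalIntegral.continuous_parametric_primitive_of_continuous
      (μ := volume) (f := fun θ r => w r θ) (a₀ := 0) hswap
    exact (h.comp (continuous_snd.prodMk continuous_fst)).congr fun x => rfl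
  refine ContinuousOn.congr hcont.continuousOn ?_
  rintro ⟨s, θ⟩ ⟨hs, -⟩
  exact ftc_time (fun r => W r θ) (fun r => w r θ) (fun r hr => hW θ r hr)
    (hw.comp (continuous_id.prodMk continuous_const)) (left_mem_Icc.mpr hb) hs

/-- the kinetic energy E(t) = ∫₀¹ u_θ² satisfies
E'(t) = -(λ-2) ∫₀¹ u_θ³ for solutions of the μ-λ equation; in particular E is
constant for λ = 2, and I(t) = ((λ-3)/2)E(t) - λσ² is constant for λ ∈ {2,3}
(equal to -3σ² when λ = 3). -/
theorem stmt_4 (lam : ℝ) (T : EReal) (hT : 0 < T)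
    (J : Set ℝ) (hJ : J = {t : ℝ | 0 ≤ t ∧ (t : EReal) < T})
    (u ut uθ utθ uθθ utθθ uθθθ : ℝ → ℝ → ℝ) (σ : ℝ)
    (huper : ∀ t ∈ J, ∀ θ : ℝ, u t (θ + 1) = u t θ)
    -- u is C³ in θ
    (huθ : ∀ t ∈ J, ∀ θ : ℝ, HasDerivAt (u t) (uθ t θ) θ)
    (huθθ : ∀ t ∈ J, ∀ θ : ℝ, HasDerivAt (uθ t) (uθθ t θ) θ)
    (huθθθ : ∀ t ∈ J, ∀ θ : ℝ, HasDerivAt (uθθ t) (uθθθ t θ) θ)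
    (huθθθc : ∀ t ∈ J, Continuous (uθθθ t))
    -- u is C¹ in t, with continuous mixed partials u_t, u_tθ, u_tθθ
    (hut : ∀ θ : ℝ, ∀ t ∈ J, HasDerivWithinAt (fun s => u s θ) (ut t θ) J t)
    (hutθ : ∀ θ : ℝ, ∀ t ∈ J, HasDerivWithinAt (fun s => uθ s θ) (utθ t θ) J t)
    (hutθθ : ∀ θ : ℝ, ∀ t ∈ J, HasDerivWithinAt (fun s => uθθ s θ) (utθθ t θ) J t)
    (hutc : ContinuousOn (fun p : ℝ × ℝ => ut p.1 p.2) (J ×ˢ univ))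
    (hutθc : ContinuousOn (fun p : ℝ × ℝ => utθ p.1 p.2) (J ×ˢ univ))
    (hutθθc : ContinuousOn (fun p : ℝ × ℝ => utθθ p.1 p.2) (J ×ˢ univ))
    -- σ = ∫₀¹ u(t,θ) dθ, constant in t
    (hσ : ∀ t ∈ J, (∫ φ in (0:ℝ)..1, u t φ) = σ)
    -- the μ-λ equation m_t + u m_θ + λ u_θ m = 0 with m = σ - u_θθ
    (hPDE : ∀ t ∈ J, ∀ θ : ℝ,
      -(utθθ t θ) + u t θ * (-(uθθθ t θ)) + lam * uθ t θ * (σ - uθθ t θ) = 0) :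
    (∀ t ∈ J, HasDerivWithinAt (fun s => ∫ φ in (0:ℝ)..1, uθ s φ ^ 2)
        (-(lam - 2) * ∫ φ in (0:ℝ)..1, uθ t φ ^ 3) J t) ∧
    (lam = 2 → ∀ t ∈ J,
      (∫ φ in (0:ℝ)..1, uθ t φ ^ 2) = ∫ φ in (0:ℝ)..1, uθ 0 φ ^ 2) ∧
    ((lam = 2 ∨ lam = 3) → ∀ t ∈ J,
      (lam - 3) / 2 * (∫ φ in (0:ℝ)..1, uθ t φ ^ 2) - lam * σ ^ 2
        = (lam - 3) / 2 * (∫ φ in (0:ℝ)..1, uθ 0 φ ^ 2) - lam * σ ^ 2) ∧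
    (lam = 3 → ∀ t ∈ J,
      (lam - 3) / 2 * (∫ φ in (0:ℝ)..1, uθ t φ ^ 2) - lam * σ ^ 2 = -3 * σ ^ 2) := by
  have hmemJ : ∀ x : ℝ, x ∈ J ↔ 0 ≤ x ∧ (x : EReal) < T := by
    intro x; rw [hJ]; exact Iff.rfl
  have hJ0 : (0:ℝ) ∈ J := (hmemJ 0).mpr ⟨le_refl 0, by exact_mod_cast hT⟩
  have hJb : ∀ t ∈ J, ∃ b : ℝ, t < b ∧ b ∈ J := by
    intro t htJ
    obtain ⟨ht0, htT⟩ := (hmemJ t).mp htJ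
    obtain ⟨x, hx1, hx2⟩ := EReal.lt_iff_exists_real_btwn.mp htT
    have htx : t < x := by exact_mod_cast hx1
    exact ⟨x, htx, (hmemJ x).mpr ⟨le_of_lt (lt_of_le_of_lt ht0 htx), hx2⟩⟩
  -- periodicity of θ-derivatives
  have per_uθ : ∀ r ∈ J, ∀ θ : ℝ, uθ r (θ + 1) = uθ r θ := by
    intro r hr θ
    have h1 : HasDerivAt (fun x => u r (x + 1)) (uθ r (θ + 1)) θ := by
      have := (huθ r hr (θ + 1)).comp θ ((hasDerivAt_id θ).add_const 1)
      simpa [Function.comp_def] using this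
    have h2 : (fun x => u r (x + 1)) = u r := funext fun x => huper r hr x
    rw [h2] at h1
    exact h1.unique (huθ r hr θ)
  have per_uθθ : ∀ r ∈ J, ∀ θ : ℝ, uθθ r (θ + 1) = uθθ r θ := by
    intro r hr θ
    have h1 : HasDerivAt (fun x => uθ r (x + 1)) (uθθ r (θ + 1)) θ := by
      have := (huθθ r hr (θ + 1)).comp θ ((hasDerivAt_id θ).add_const 1)
      simpa [Function.comp_def] using this
    have h2 : (fun x => uθ r (x + 1)) = uθ r := funext fun x => per_uθ r hr x
    rw [h2] at h1
    exact h1.unique (huθθ r hr θ)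
  -- main derivative statement
  have main : ∀ t ∈ J, HasDerivWithinAt (fun s => ∫ φ in (0:ℝ)..1, uθ s φ ^ 2)
      (-(lam - 2) * ∫ φ in (0:ℝ)..1, uθ t φ ^ 3) J t := by
    intro t htJ
    obtain ⟨b, htb, hbJ⟩ := hJb t htJ
    have ht0 : 0 ≤ t := ((hmemJ t).mp htJ).1
    have hb0 : 0 < b := lt_of_le_of_lt ht0 htb
    have hKJ : Icc (0:ℝ) b ⊆ J := by
      intro x hx
      exact (hmemJ x).mpr ⟨hx.1,
        lt_of_le_of_lt (EReal.coe_le_coe_iff.mpr hx.2) ((hmemJ b).mp hbJ).2⟩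
    have htK : t ∈ Icc (0:ℝ) b := ⟨ht0, htb.le⟩
    -- the clamp map
    set c : ℝ → ℝ := fun s => max 0 (min s b) with hc
    have hc_cont : Continuous c := continuous_const.max (continuous_id.min continuous_const)
    have hc_mem : ∀ s, c s ∈ Icc (0:ℝ) b :=
      fun s => ⟨le_max_left _ _, max_le hb0.le (min_le_right _ _)⟩
    have hc_id : ∀ s ∈ Icc (0:ℝ) b, c s = s := by
      intro s hs
      simp only [hc]
      rw [min_eq_left hs.2, max_eq_right hs.1]
    have hcmap : Continuous fun p : ℝ × ℝ => (c p.1, p.2) :=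
      (hc_cont.comp continuous_fst).prodMk continuous_snd
    -- clamped mixed partials, globally continuous
    have hVT : Continuous fun p : ℝ × ℝ => utθ (c p.1) p.2 :=
      hutθc.comp_continuous hcmap (fun p => ⟨hKJ (hc_mem p.1), mem_univ _⟩)
    have hVTT : Continuous fun p : ℝ × ℝ => utθθ (c p.1) p.2 :=
      hutθθc.comp_continuous hcmap (fun p => ⟨hKJ (hc_mem p.1), mem_univ _⟩)
    -- joint continuity of uθ on K × ℝ
    have huθ0c : Continuous (uθ 0) :=
      continuous_iff_continuousAt.mpr fun x => (huθθ 0 hJ0 x).continuousAt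
    have huθK : ContinuousOn (fun p : ℝ × ℝ => uθ p.1 p.2) (Icc (0:ℝ) b ×ˢ univ) := by
      apply joint_cont uθ (fun r φ => utθ (c r) φ) hVT _ huθ0c hb0.le
      intro θ r hr
      show HasDerivWithinAt (fun s => uθ s θ) (utθ (c r) θ) (Icc (0:ℝ) b) r
      rw [hc_id r hr]
      exact (hutθ θ r (hKJ hr)).mono hKJ
    have hVθ : Continuous fun p : ℝ × ℝ => uθ (c p.1) p.2 :=
      huθK.comp_continuous hcmap (fun p => ⟨hc_mem p.1, mem_univ _⟩)
    -- the derivative of the energy within K, via `deriv_param`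
    have hw_cont : Continuous fun p : ℝ × ℝ => 2 * uθ (c p.1) p.2 * utθ (c p.1) p.2 :=
      (continuous_const.mul hVθ).mul hVT
    have hWder : ∀ φ : ℝ, ∀ r ∈ Icc (0:ℝ) b,
        HasDerivWithinAt (fun s => uθ s φ ^ 2) (2 * uθ (c r) φ * utθ (c r) φ)
          (Icc (0:ℝ) b) r := by
      intro φ r hr
      have h := ((hutθ φ r (hKJ hr)).mono hKJ).pow 2
      have he : ((2:ℕ) : ℝ) * uθ r φ ^ (2 - 1) * utθ r φ
          = 2 * uθ (c r) φ * utθ (c r) φ := by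
        rw [hc_id r hr]; push_cast; ring
      rwa [he] at h
    have hWc : ∀ s ∈ Icc (0:ℝ) b, Continuous fun φ => uθ s φ ^ 2 := fun s hs =>
      (continuous_iff_continuousAt.mpr fun x => (huθθ s (hKJ hs) x).continuousAt).pow 2
    have HD : HasDerivWithinAt (fun s => ∫ φ in (0:ℝ)..1, uθ s φ ^ 2)
        (∫ φ in (0:ℝ)..1, 2 * uθ (c t) φ * utθ (c t) φ) (Icc (0:ℝ) b) t :=
      deriv_param (fun s φ => uθ s φ ^ 2) (fun r φ => 2 * uθ (c r) φ * utθ (c r) φ)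
        1 hw_cont hWder hWc htK
    -- Clairaut: the θ-derivative of utθ t is utθθ t
    have hUDK : UniqueDiffOn ℝ (Icc (0:ℝ) b) := uniqueDiffOn_Icc hb0
    have huθθ_cont : ∀ s ∈ J, Continuous (uθθ s) := fun s hs =>
      continuous_iff_continuousAt.mpr fun x => (huθθθ s hs x).continuousAt
    have hθftc2 : ∀ s ∈ Icc (0:ℝ) b, ∀ θ : ℝ,
        (∫ φ in (0:ℝ)..θ, uθθ s φ) = uθ s θ - uθ s 0 := fun s hs θ =>
      intervalIntegral.integral_eq_sub_of_hasDerivAt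
        (fun x _ => huθθ s (hKJ hs) x) ((huθθ_cont s (hKJ hs)).intervalIntegrable _ _)
    have C2eq : ∀ θ : ℝ, utθ t θ - utθ t 0 = ∫ φ in (0:ℝ)..θ, utθθ t φ := by
      intro θ
      have X2 : HasDerivWithinAt (fun s => ∫ φ in (0:ℝ)..θ, uθθ s φ)
          (∫ φ in (0:ℝ)..θ, utθθ (c t) φ) (Icc (0:ℝ) b) t :=
        deriv_param uθθ (fun r φ => utθθ (c r) φ) θ hVTT
        (fun φ r hr => by
          show HasDerivWithinAt (fun s => uθθ s φ) (utθθ (c r) φ) (Icc (0:ℝ) b) r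
          rw [hc_id r hr]
          exact (hutθθ φ r (hKJ hr)).mono hKJ)
        (fun s hs => huθθ_cont s (hKJ hs)) htK
      have X1 : HasDerivWithinAt (fun s => ∫ φ in (0:ℝ)..θ, uθθ s φ)
          (utθ t θ - utθ t 0) (Icc (0:ℝ) b) t := by
        apply HasDerivWithinAt.congr
          (((hutθ θ t htJ).mono hKJ).sub ((hutθ 0 t htJ).mono hKJ))
          (fun s hs => (hθftc2 s hs θ)) (hθftc2 t htK θ)
      have e1 := X1.derivWithin (hUDK t htK)
      have e2 := X2.derivWithin (hUDK t htK)
      rw [← e1, e2, hc_id t htK]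
    have hutθθ_cont_t : Continuous (utθθ t) := by
      have h : Continuous fun x : ℝ => utθθ (c t) x :=
        (hVTT.comp (continuous_const.prodMk continuous_id)).congr fun x => rfl
      rw [hc_id t htK] at h
      exact h.congr fun x => rfl
    have C2 : ∀ θ : ℝ, HasDerivAt (utθ t) (utθθ t θ) θ := by
      intro θ
      have h := ((hutθθ_cont_t.integral_hasStrictDerivAt 0 θ).hasDerivAt).const_add (utθ t 0)
      have heq : utθ t = fun x => utθ t 0 + ∫ φ in (0:ℝ)..x, utθθ t φ :=
        funext fun x => by have := C2eq x; linarith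
      rw [heq]
      exact h
    -- periodicity of utθ t
    have per_utθ : ∀ θ : ℝ, utθ t (θ + 1) = utθ t θ := by
      intro θ
      have h1 : HasDerivWithinAt (fun s => uθ s θ) (utθ t (θ + 1)) (Icc (0:ℝ) b) t := by
        apply HasDerivWithinAt.congr ((hutθ (θ + 1) t htJ).mono hKJ)
          (fun s hs => (per_uθ s (hKJ hs) θ).symm) (per_uθ t htJ θ).symm
      have e1 := h1.derivWithin (hUDK t htK)
      have e2 := ((hutθ θ t htJ).mono hKJ).derivWithin (hUDK t htK)
      exact e1.symm.trans e2
    -- the θ-integration-by-parts computation at time t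
    have hθcont : Continuous (uθ t) :=
      continuous_iff_continuousAt.mpr fun x => (huθθ t htJ x).continuousAt
    have hutθcont : Continuous (utθ t) :=
      continuous_iff_continuousAt.mpr fun x => (C2 x).continuousAt
    have hΨder : ∀ x ∈ uIcc (0:ℝ) 1,
        HasDerivAt (fun x => 2 * (u t x * utθ t x) + 2 * (u t x * u t x * uθθ t x)
            - lam * σ * (u t x * u t x) - (2 - lam) * (u t x * (uθ t x * uθ t x)))
          (2 * (uθ t x * utθ t x) + (lam - 2) * uθ t x ^ 3) x := by
      intro x _
      have hv := huθ t htJ x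
      have hv1 := huθθ t htJ x
      have hv2 := huθθθ t htJ x
      have hp := C2 x
      have H := ((((hv.mul hp).const_mul (2:ℝ)).add
          (((hv.mul hv).mul hv2).const_mul (2:ℝ))).sub
          ((hv.mul hv).const_mul (lam * σ))).sub
          ((hv.mul (hv1.mul hv1)).const_mul (2 - lam))
      have hpde := hPDE t htJ x
      have hVeq : 2 * (uθ t x * utθ t x + u t x * utθθ t x)
            + 2 * ((uθ t x * u t x + u t x * uθ t x) * uθθ t x + u t x * u t x * uθθθ t x)
            - lam * σ * (uθ t x * u t x + u t x * uθ t x)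
            - (2 - lam) * (uθ t x * (uθ t x * uθ t x)
                + u t x * (uθθ t x * uθ t x + uθ t x * uθθ t x))
          = 2 * (uθ t x * utθ t x) + (lam - 2) * uθ t x ^ 3 := by
        linear_combination (-2 * u t x) * hpde
      rw [← hVeq]
      exact H
    have hΨint : IntervalIntegrable
        (fun x => 2 * (uθ t x * utθ t x) + (lam - 2) * uθ t x ^ 3) volume 0 1 :=
      ((continuous_const.mul (hθcont.mul hutθcont)).add
        (continuous_const.mul (hθcont.pow 3))).intervalIntegrable _ _
    have hFTC := intervalIntegral.integral_eq_sub_of_hasDerivAt hΨder hΨint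
    have b1 : u t 1 = u t 0 := by have := huper t htJ 0; rwa [zero_add] at this
    have b2 : uθ t 1 = uθ t 0 := by have := per_uθ t htJ 0; rwa [zero_add] at this
    have b3 : uθθ t 1 = uθθ t 0 := by have := per_uθθ t htJ 0; rwa [zero_add] at this
    have b4 : utθ t 1 = utθ t 0 := by have := per_utθ 0; rwa [zero_add] at this
    have hzero : (∫ x in (0:ℝ)..1, (2 * (uθ t x * utθ t x) + (lam - 2) * uθ t x ^ 3)) = 0 := by
      rw [hFTC]
      simp only [b1, b2, b3, b4]
      ring
    have i1 : IntervalIntegrable (fun x => 2 * (uθ t x * utθ t x)) volume 0 1 :=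
      (continuous_const.mul (hθcont.mul hutθcont)).intervalIntegrable _ _
    have i2 : IntervalIntegrable (fun x => (lam - 2) * uθ t x ^ 3) volume 0 1 :=
      (continuous_const.mul (hθcont.pow 3)).intervalIntegrable _ _
    have hsplit := intervalIntegral.integral_add i1 i2
    have h3 : (∫ x in (0:ℝ)..1, (lam - 2) * uθ t x ^ 3)
        = (lam - 2) * ∫ x in (0:ℝ)..1, uθ t x ^ 3 :=
      intervalIntegral.integral_const_mul _ _
    rw [hsplit, h3] at hzero
    have hval : (∫ x in (0:ℝ)..1, 2 * (uθ t x * utθ t x))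
        = -(lam - 2) * ∫ x in (0:ℝ)..1, uθ t x ^ 3 := by linarith
    have hw_t : (∫ φ in (0:ℝ)..1, 2 * uθ (c t) φ * utθ (c t) φ)
        = ∫ x in (0:ℝ)..1, 2 * (uθ t x * utθ t x) := by
      apply intervalIntegral.integral_congr
      intro φ _
      rw [hc_id t htK]; ring
    have HDval : HasDerivWithinAt (fun s => ∫ φ in (0:ℝ)..1, uθ s φ ^ 2)
        (-(lam - 2) * ∫ φ in (0:ℝ)..1, uθ t φ ^ 3) (Icc (0:ℝ) b) t := by
      rw [← hval, ← hw_t]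
      exact HD
    have hKmem : Icc (0:ℝ) b ∈ nhdsWithin t J := by
      apply mem_nhdsWithin.mpr
      refine ⟨Iio b, isOpen_Iio, htb, ?_⟩
      rintro x ⟨hx1, hx2⟩
      exact ⟨((hmemJ x).mp hx2).1, le_of_lt hx1⟩
    exact HDval.mono_of_mem_nhdsWithin hKmem
  -- constancy of the energy when lam = 2
  have hconst : lam = 2 → ∀ t ∈ J,
      (∫ φ in (0:ℝ)..1, uθ t φ ^ 2) = ∫ φ in (0:ℝ)..1, uθ 0 φ ^ 2 := by
    intro hlam t htJ
    have hder0 : ∀ x ∈ J, HasDerivWithinAt (fun s => ∫ φ in (0:ℝ)..1, uθ s φ ^ 2) 0 J x := by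
      intro x hx
      have h := main x hx
      rw [hlam] at h
      simpa using h
    have ht0 : 0 ≤ t := ((hmemJ t).mp htJ).1
    rcases eq_or_lt_of_le ht0 with h | h
    · rw [← h]
    · have hIccJ : Icc (0:ℝ) t ⊆ J := by
        intro x hx
        exact (hmemJ x).mpr ⟨hx.1,
          lt_of_le_of_lt (EReal.coe_le_coe_iff.mpr hx.2) ((hmemJ t).mp htJ).2⟩
      refine constant_of_has_deriv_right_zero
        (f := fun s => ∫ φ in (0:ℝ)..1, uθ s φ ^ 2) (a := 0) (b := t)
        (fun x hx => ((hder0 x (hIccJ hx)).continuousWithinAt).mono hIccJ) ?_ t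
        (right_mem_Icc.mpr ht0)
      intro x hx
      have hJmem : J ∈ nhdsWithin x (Ici x) := by
        apply mem_nhdsWithin.mpr
        refine ⟨Iio t, isOpen_Iio, hx.2, ?_⟩
        rintro y ⟨hy1, hy2⟩
        exact hIccJ ⟨le_trans hx.1 hy2, le_of_lt hy1⟩
      exact (hder0 x (hIccJ ⟨hx.1, hx.2.le⟩)).mono_of_mem_nhdsWithin hJmem
  refine ⟨main, hconst, ?_, ?_⟩
  · rintro (h | h) t htJ
    · rw [hconst h t htJ]
    · rw [h]; norm_num
  · intro h t htJ
    rw [h]; norm_num
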